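/- Let φ be an anisotropic quasilinear p-form over F and let L/F be a separably generated field extension. Then φ_L is anisotropic. -/

import Mathlib

/-- The diagonal quasilinear p-form with coefficients a. -/
def qlForm (p : ℕ) {F : Type*} [Field F] {n : ℕ} (a : Fin n → F) (x : Fin n → F) : F :=
  ∑ i, a i * x i ^ p

open MvPolynomial in
lemma qlAux_coeff_pow_char {σ F : Type*} [Field F] (p : ℕ) [Fact p.Prime] [CharP F p]
    (f : MvPolynomial σ F) (m : σ →₀ ℕ) :
    coeff (p • m) (f ^ p) = coeff m f ^ p := by
  classical
  have hp : p ≠ 0 := (Fact.out : p.Prime).ne_zero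
  have hinj : Function.Injective (fun m : σ →₀ ℕ => p • m) := by
    intro a b hab
    ext j
    have := DFunLike.congr_fun hab j
    simp only [Finsupp.smul_apply, smul_eq_mul] at this
    exact Nat.eq_of_mul_eq_mul_left hp.bot_lt this
  conv_lhs => rw [f.as_sum, sum_pow_char, coeff_sum]
  simp_rw [monomial_pow, coeff_monomial]
  by_cases hm : m ∈ f.support
  · rw [Finset.sum_eq_single m]
    · simp
    · intro b hb hbm
      rw [if_neg (fun h => hbm (hinj h))]
    · intro h; exact absurd hm h
  · rw [Finset.sum_eq_zero, MvPolynomial.notMem_support_iff.1 hm, zero_pow hp]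
    intro b hb
    refine if_neg fun h => hm ?_
    have hbm : b = m := hinj h
    rwa [hbm] at hb

open MvPolynomial in
lemma qlAux_mvpoly {σ F : Type*} [Field F] (p n : ℕ) [Fact p.Prime] [CharP F p]
    (a : Fin n → F) (haniso : ∀ x, qlForm p a x = 0 → x = 0)
    (f : Fin n → MvPolynomial σ F) (h : ∑ i, C (a i) * f i ^ p = 0) :
    ∀ i, f i = 0 := by
  intro i
  ext m
  have h2 := congrArg (coeff (p • m)) h
  rw [coeff_sum] at h2
  simp_rw [coeff_C_mul, qlAux_coeff_pow_char] at h2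
  have := haniso (fun i => coeff m (f i)) h2
  simpa using congrFun this i

open MvPolynomial in
lemma qlAux_adjoin {F L : Type*} [Field F] [Field L] [Algebra F L]
    (p n : ℕ) [Fact p.Prime] [CharP F p]
    {s : Set L} (hs : AlgebraicIndependent F ((↑) : s → L)) (a : Fin n → F)
    (haniso : ∀ x, qlForm p a x = 0 → x = 0)
    (x : Fin n → L) (hmem : ∀ i, x i ∈ IntermediateField.adjoin F s)
    (hx : ∑ i, algebraMap F L (a i) * x i ^ p = 0) : ∀ i, x i = 0 := by
  classical
  have hrep : ∀ i, ∃ r t : MvPolynomial s F,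
      aeval (Subtype.val : s → L) t ≠ 0 ∧
      x i = aeval (Subtype.val : s → L) r / aeval (Subtype.val : s → L) t := by
    intro i
    obtain ⟨r, t, hrt⟩ := (IntermediateField.mem_adjoin_iff F (x i)).1 (hmem i)
    by_cases ht : aeval (Subtype.val : s → L) t = 0
    · exact ⟨0, 1, by simp, by simp [hrt, ht]⟩
    · exact ⟨r, t, ht, hrt⟩
  choose r t htne hxi using hrep
  set Q : MvPolynomial s F := ∏ j, t j with hQ
  set P := fun i : Fin n => r i * ∏ j ∈ Finset.univ.erase i, t j with hP
  have hQne : aeval (Subtype.val : s → L) Q ≠ 0 := by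
    rw [hQ, map_prod]
    exact Finset.prod_ne_zero_iff.2 fun j _ => htne j
  have hxQ : ∀ i, x i * aeval (Subtype.val : s → L) Q =
      aeval (Subtype.val : s → L) (P i) := by
    intro i
    rw [hxi i, hQ, hP, map_mul, map_prod, map_prod,
      ← Finset.mul_prod_erase Finset.univ _ (Finset.mem_univ i)]
    rw [div_mul_eq_mul_div, mul_comm ((aeval Subtype.val) (t i)), ← mul_assoc,
      mul_div_assoc, div_self (htne i), mul_one]
  have hkey : aeval (Subtype.val : s → L) (∑ i, C (a i) * P i ^ p) = 0 := by
    rw [map_sum]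
    simp_rw [map_mul, map_pow, aeval_C, ← hxQ, mul_pow, ← mul_assoc]
    rw [← Finset.sum_mul, hx, zero_mul]
  have hP0 : ∀ i, P i = 0 :=
    qlAux_mvpoly p n a haniso P (algebraicIndependent_iff.1 hs _ hkey)
  intro i
  have := hxQ i
  rw [hP0 i, map_zero] at this
  exact (mul_eq_zero.1 this).resolve_right hQne

set_option maxHeartbeats 1000000 in
set_option synthInstance.maxHeartbeats 100000 in
/-- An anisotropic quasilinear p-form remains anisotropic over any separably
generated field extension. -/
theorem anisotropic_over_separably_generated
    {F L : Type*} [Field F] [Field L] [Algebra F L]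
    (p n : ℕ) [Fact p.Prime] [CharP F p]
    (hsep : ∃ s : Set L, AlgebraicIndependent F ((↑) : s → L) ∧
        Algebra.IsSeparable (IntermediateField.adjoin F s) L)
    (a : Fin n → F)
    (haniso : ∀ x, qlForm p a x = 0 → x = 0) :
    ∀ x : Fin n → L, qlForm p (fun i => algebraMap F L (a i)) x = 0 → x = 0 := by
  classical
  obtain ⟨s, hs, hsepL⟩ := hsep
  set K := IntermediateField.adjoin F s with hK
  haveI : Algebra.IsSeparable K L := hsepL
  haveI : CharP L p := charP_of_injective_algebraMap (algebraMap F L).injective p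
  haveI : CharP K p := charP_of_injective_algebraMap (algebraMap F K).injective p
  intro x hx
  have hx' : ∑ i, algebraMap F L (a i) * x i ^ p = 0 := hx
  -- the finite extension of K generated by the x i
  haveI : Finite (Set.range x) := (Set.finite_range x).to_subtype
  set M : IntermediateField K L := IntermediateField.adjoin K (Set.range x) with hM
  haveI : FiniteDimensional K M :=
    IntermediateField.finiteDimensional_adjoin
      (fun l _ => (Algebra.IsSeparable.isSeparable K l).isIntegral)
  haveI : CharP M p := charP_of_injective_algebraMap (algebraMap K M).injective p
  haveI : Algebra.IsSeparable K M := Algebra.isSeparable_tower_bot_of_isSeparable K M L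
  -- the set of p-th powers in M
  set pset : Set M := Set.range (fun m : M => m ^ p) with hpset
  set N : IntermediateField K M := IntermediateField.adjoin K pset with hN
  haveI : CharP (↥N) p := charP_of_injective_algebraMap (algebraMap (↥K) (↥N)).injective p
  haveI : IsPurelyInseparable (↥N) (↥M) := by
    rw [isPurelyInseparable_iff_pow_mem (↥N) p]
    intro m
    refine ⟨1, ?_⟩
    rw [pow_one]
    exact ⟨⟨m ^ p, IntermediateField.subset_adjoin _ _ ⟨m, rfl⟩⟩, rfl⟩
  haveI : Algebra.IsSeparable (↥N) (↥M) := Algebra.isSeparable_tower_top_of_isSeparable (↥K) (↥N) (↥M)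
  have hNtop : ∀ m : M, m ∈ N := by
    intro m
    obtain ⟨y, hy⟩ := IsPurelyInseparable.surjective_algebraMap_of_isSeparable (↥N) (↥M) m
    exact hy ▸ y.2
  -- span of p-th powers is everything
  have hone : (1 : M) ∈ Submodule.span K pset := Submodule.subset_span ⟨1, one_pow p⟩
  have hmul : ∀ y z : M, y ∈ Submodule.span K pset → z ∈ Submodule.span K pset →
      y * z ∈ Submodule.span K pset := by
    have hle : Submodule.span K pset * Submodule.span K pset ≤ Submodule.span K pset := by
      rw [Submodule.span_mul_span]
      refine Submodule.span_le.2 ?_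
      rintro w hw
      obtain ⟨y, hy, z, hz, rfl⟩ := Set.mem_mul.1 hw
      obtain ⟨u, rfl⟩ := hy
      obtain ⟨v, rfl⟩ := hz
      exact Submodule.subset_span ⟨u * v, mul_pow u v p⟩
    exact fun y z hy hz => hle (Submodule.mul_mem_mul hy hz)
  have hNle : N.toSubalgebra ≤ (Submodule.span K pset).toSubalgebra hone hmul := by
    rw [hN, IntermediateField.adjoin_toSubalgebra_of_isAlgebraic
      (fun y _ => Algebra.IsAlgebraic.isAlgebraic y)]
    exact Algebra.adjoin_le Submodule.subset_span
  have hspan_top : Submodule.span K pset = ⊤ := by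
    rw [eq_top_iff]
    intro m _
    exact hNle (hNtop m)
  -- a basis whose p-th powers are linearly independent
  set d := Module.finrank K M with hd
  set e : Module.Basis (Fin d) K M := Module.finBasis K M with he
  have hespan : ⊤ ≤ Submodule.span K (Set.range fun j => e j ^ p) := by
    rw [← hspan_top]
    refine Submodule.span_le.2 ?_
    rintro _ ⟨m, rfl⟩
    have hmp : m ^ p = ∑ j, (e.repr m j) ^ p • (e j ^ p) := by
      conv_lhs => rw [← e.sum_repr m]
      rw [sum_pow_char]
      exact Finset.sum_congr rfl fun j _ => smul_pow _ _ _
    have hmem2 : m ^ p ∈ Submodule.span (↥K) (Set.range fun j => e j ^ p) := by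
      rw [hmp]
      exact Submodule.sum_mem _ fun j _ =>
        Submodule.smul_mem _ _ (Submodule.subset_span ⟨j, rfl⟩)
    exact hmem2
  have hli : LinearIndependent K (fun j => e j ^ p) :=
    linearIndependent_of_top_le_span_of_card_eq_finrank hespan (by simp [hd])
  have hliL : LinearIndependent K (fun j => ((e j : L)) ^ p) := by
    have h1 := hli.map' M.val.toLinearMap
      (LinearMap.ker_eq_bot.2 fun a b hab => Subtype.ext hab)
    have h2 : (M.val.toLinearMap ∘ fun j => e j ^ p) = fun j => ((e j : L)) ^ p :=
      funext fun j => by simp [map_pow]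
    rwa [h2] at h1
  -- coordinates
  have hxmem : ∀ i, x i ∈ M := fun i =>
    IntermediateField.subset_adjoin K (Set.range x) ⟨i, rfl⟩
  set x' : Fin n → M := fun i => ⟨x i, hxmem i⟩ with hx'def
  set c : Fin n → Fin d → K := fun i j => e.repr (x' i) j with hc
  have hxcoord : ∀ i, x i = ∑ j, c i j • ((e j : L)) := by
    intro i
    have h1 : x i = M.val.toLinearMap (∑ j, c i j • e j) := by
      rw [Module.Basis.sum_repr]
      rfl
    rw [h1, map_sum]
    exact Finset.sum_congr rfl fun j _ => by rw [map_smul]; rfl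
  set b : Fin d → K := fun j => ∑ i, algebraMap F K (a i) * c i j ^ p with hb
  have key : ∑ j, b j • (((e j : L)) ^ p) = 0 := by
    have expand : ∀ i, x i ^ p = ∑ j, algebraMap K L ((c i j) ^ p) * ((e j : L)) ^ p := by
      intro i
      rw [hxcoord i, sum_pow_char]
      exact Finset.sum_congr rfl fun j _ => by rw [smul_pow, Algebra.smul_def]
    have h3 : ∑ i, algebraMap F L (a i) * x i ^ p = ∑ j, b j • (((e j : L)) ^ p) := by
      simp_rw [expand, Finset.mul_sum]
      rw [Finset.sum_comm]
      refine Finset.sum_congr rfl fun j _ => ?_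
      rw [Algebra.smul_def, hb, map_sum, Finset.sum_mul]
      refine Finset.sum_congr rfl fun i _ => ?_
      rw [map_mul, ← IsScalarTower.algebraMap_apply F K L, mul_assoc]
    rw [← h3, hx']
  have hb0 : ∀ j, b j = 0 := Fintype.linearIndependent_iff.1 hliL b key
  have hc0 : ∀ i j, c i j = 0 := by
    intro i j
    have hKeq : ∑ i, algebraMap F L (a i) * ((c i j : L)) ^ p = 0 := by
      have := congrArg (algebraMap K L) (hb0 j)
      rw [hb, map_sum, map_zero] at this
      rw [← this]
      refine Finset.sum_congr rfl fun i _ => ?_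
      rw [map_mul, map_pow, ← IsScalarTower.algebraMap_apply F K L]
      rfl
    have := qlAux_adjoin p n hs a haniso (fun i => ((c i j : L)))
      (fun i => (c i j).2) hKeq i
    exact_mod_cast this
  funext i
  rw [hxcoord i, Pi.zero_apply]
  exact Finset.sum_eq_zero fun j _ => by rw [hc0 i j, zero_smul]
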